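/- Let A₁ and A₂ be disjoint subsets of {1,…,n} with |A₂| = 2m even, m ≥ 2, and |A₁| = a ≥ 1, and let P₁, …, P_k (k ≥ 1) be partitions of A₂ into pairs that are pairwise disjoint as sets of pairs. Let W = ∪_{t=1}^{k} W^(t), where W^(t) is the set of vertices of G(n,3,1) of the form {x} ∪ e with x ∈ A₁ and e ∈ P_t. Then the subgraph of G(n,3,1) induced on W is regular of degree (m−1) + (k−1)·((m−2) + 2·(a−1)), and hence the number of edges of G(n,3,1) with both endpoints in W equals (1/2)·k·a·m·((m−1) + (k−1)·((m−2) + 2·(a−1))). -/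

import Mathlib

/-- The vertices of `G(n,3,1)`: 3-element subsets of `{1, …, n}`. -/
abbrev Vtx (n : ℕ) := {s : Finset ℕ // s ⊆ Finset.Icc 1 n ∧ s.card = 3}

/-- The graph `G(n,3,1)`: two 3-element subsets of `{1, …, n}` are adjacent
iff they intersect in exactly one element. -/
def G (n : ℕ) : SimpleGraph (Vtx n) where
  Adj a b := (a.1 ∩ b.1).card = 1
  symm := ⟨fun a b h => by show (b.1 ∩ a.1).card = 1; rw [Finset.inter_comm]; exact h⟩
  loopless := ⟨fun a h => by
    have h' : (a.1 ∩ a.1).card = 1 := h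
    rw [Finset.inter_self, a.2.2] at h'; omega⟩

instance (n : ℕ) : DecidableRel (G n).Adj := fun a b =>
  inferInstanceAs (Decidable ((a.1 ∩ b.1).card = 1))

instance (n : ℕ) : Fintype (Vtx n) :=
  Fintype.subtype ((Finset.Icc 1 n).powerset.filter fun s => s.card = 3) (by
    intro s
    simp [Finset.mem_powerset, and_comm])

instance (n : ℕ) (s : Set (Vtx n)) : DecidableRel ((G n).induce s).Adj := fun a b =>
  inferInstanceAs (Decidable (((a : Vtx n).1 ∩ (b : Vtx n).1).card = 1))

/-- The number of edges of `G(n,3,1)` with both endpoints in `W`. -/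
def edgesIn (n : ℕ) (W : Finset (Vtx n)) : ℕ :=
  ((G n).induce (W : Set (Vtx n))).edgeFinset.card

/-- The independence number of `G(n,3,1)`. -/
noncomputable def alpha (n : ℕ) : ℕ :=
  sSup {k | ∃ W : Finset (Vtx n), W.card = k ∧ ∀ u ∈ W, ∀ v ∈ W, ¬ (G n).Adj u v}

/-- The minimal number of edges induced on a vertex subset of cardinality `l`. -/
noncomputable def rmin (n l : ℕ) : ℕ :=
  sInf {m | ∃ W : Finset (Vtx n), W.card = l ∧ edgesIn n W = m}


lemma inter_card_aux {A₁ A₂ : Finset ℕ} (hdisj : Disjoint A₁ A₂)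
    {x y : ℕ} {e f : Finset ℕ} (hx : x ∈ A₁) (hy : y ∈ A₁) (he : e ⊆ A₂) (hf : f ⊆ A₂) :
    (insert x e ∩ insert y f).card = (if x = y then 1 else 0) + (e ∩ f).card := by
  have hA : ∀ z, z ∈ A₁ → z ∈ A₂ → False := fun z h1 h2 =>
    Finset.disjoint_left.mp hdisj h1 h2
  have hset : insert x e ∩ insert y f = ({x} ∩ {y}) ∪ (e ∩ f) := by
    ext z
    simp only [Finset.mem_inter, Finset.mem_insert, Finset.mem_union, Finset.mem_singleton]
    constructor
    · rintro ⟨hz1 | hz1, hz2 | hz2⟩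
      · exact Or.inl ⟨hz1, hz2⟩
      · exact absurd (hA z (hz1 ▸ hx) (hf hz2)) (fun h => h)
      · exact absurd (hA z (hz2 ▸ hy) (he hz1)) (fun h => h)
      · exact Or.inr ⟨hz1, hz2⟩
    · rintro (⟨hz1, hz2⟩ | ⟨hz1, hz2⟩)
      · exact ⟨Or.inl hz1, Or.inl hz2⟩
      · exact ⟨Or.inr hz1, Or.inr hz2⟩
  rw [hset, Finset.card_union_of_disjoint]
  · congr 1
    by_cases hxy : x = y
    · simp [hxy]
    · simp [Finset.singleton_inter_of_notMem, hxy]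
  · refine Finset.disjoint_left.mpr fun z hz1 hz2 => ?_
    simp only [Finset.mem_inter, Finset.mem_singleton] at hz1 hz2
    exact hA z (hz1.1 ▸ hx) (he hz2.1)

lemma insert_inj_aux {A₁ A₂ : Finset ℕ} (hdisj : Disjoint A₁ A₂)
    {x y : ℕ} {e f : Finset ℕ} (hx : x ∈ A₁) (hy : y ∈ A₁) (he : e ⊆ A₂) (hf : f ⊆ A₂)
    (h : insert x e = insert y f) : x = y ∧ e = f := by
  have hA : ∀ z, z ∈ A₁ → z ∈ A₂ → False := fun z h1 h2 =>
    Finset.disjoint_left.mp hdisj h1 h2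
  have h1 : ∀ (u : ℕ) (g : Finset ℕ), u ∈ A₁ → g ⊆ A₂ → insert u g ∩ A₁ = {u} := by
    intro u g hu hg
    ext z
    simp only [Finset.mem_inter, Finset.mem_insert, Finset.mem_singleton]
    constructor
    · rintro ⟨hz1 | hz1, hz2⟩
      · exact hz1
      · exact absurd (hA z hz2 (hg hz1)) (fun h => h)
    · rintro rfl; exact ⟨Or.inl rfl, hu⟩
  have h2 : ∀ (u : ℕ) (g : Finset ℕ), u ∈ A₁ → g ⊆ A₂ → insert u g ∩ A₂ = g := by
    intro u g hu hg
    ext z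
    simp only [Finset.mem_inter, Finset.mem_insert]
    constructor
    · rintro ⟨hz1 | hz1, hz2⟩
      · exact absurd (hA z (hz1 ▸ hu) hz2) (fun h => h)
      · exact hz1
    · intro hz; exact ⟨Or.inr hz, hg hz⟩
  constructor
  · have := (h1 x e hx he).symm.trans (h ▸ h1 y f hy hf)
    exact Finset.singleton_injective this
  · exact (h2 x e hx he).symm.trans (h ▸ h2 y f hy hf)

lemma vtx_prop {n : ℕ} {A₁ A₂ : Finset ℕ} (hA₁ : A₁ ⊆ Finset.Icc 1 n)
    (hA₂ : A₂ ⊆ Finset.Icc 1 n) (hdisj : Disjoint A₁ A₂)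
    {x : ℕ} {e : Finset ℕ} (hx : x ∈ A₁) (he : e ⊆ A₂) (hec : e.card = 2) :
    insert x e ⊆ Finset.Icc 1 n ∧ (insert x e).card = 3 := by
  have hxe : x ∉ e := fun hmem => Finset.disjoint_left.mp hdisj hx (he hmem)
  refine ⟨Finset.insert_subset (hA₁ hx) (he.trans hA₂), ?_⟩
  rw [Finset.card_insert_of_notMem hxe, hec]


lemma same_count {A₁ A₂ : Finset ℕ} (hdisj : Disjoint A₁ A₂) {x₀ : ℕ} (hx₀ : x₀ ∈ A₁)
    {Pt : Finset (Finset ℕ)} (hsub : ∀ e ∈ Pt, e ⊆ A₂) (hpair : ∀ e ∈ Pt, e.card = 2)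
    (hPd : (Pt : Set (Finset ℕ)).Pairwise Disjoint) {e₀ : Finset ℕ} (he₀ : e₀ ∈ Pt) :
    ((A₁ ×ˢ Pt).filter fun yf => (insert x₀ e₀ ∩ insert yf.1 yf.2).card = 1).card
      = Pt.card - 1 := by
  have hcongr : (A₁ ×ˢ Pt).filter (fun yf => (insert x₀ e₀ ∩ insert yf.1 yf.2).card = 1)
      = (A₁ ×ˢ Pt).filter (fun yf => yf.1 = x₀ ∧ yf.2 ≠ e₀) := by
    apply Finset.filter_congr
    intro yf hyf
    simp only [Finset.mem_product] at hyf
    rw [inter_card_aux hdisj hx₀ hyf.1 (hsub _ he₀) (hsub _ hyf.2)]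
    by_cases hfe : yf.2 = e₀
    · rw [hfe, Finset.inter_self, hpair _ he₀]
      constructor
      · intro h; split_ifs at h <;> omega
      · intro h; exact absurd rfl h.2
    · have : e₀ ∩ yf.2 = ∅ := Finset.disjoint_iff_inter_eq_empty.mp
        (hPd he₀ hyf.2 (Ne.symm hfe))
      rw [this]
      simp only [Finset.card_empty, add_zero]
      by_cases hxy : x₀ = yf.1
      · simp [hxy, hfe]
      · have hxy' : ¬ yf.1 = x₀ := fun h => hxy h.symm
        simp [hxy, hxy']
  rw [hcongr, Finset.filter_product (fun y => y = x₀) (fun f => f ≠ e₀),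
    Finset.card_product, Finset.filter_eq', if_pos hx₀,
    Finset.filter_ne', Finset.card_singleton, one_mul, Finset.card_erase_of_mem he₀]

lemma other_count {A₁ A₂ : Finset ℕ} (hdisj : Disjoint A₁ A₂) {x₀ : ℕ} (hx₀ : x₀ ∈ A₁)
    {e₀ : Finset ℕ} (he₀sub : e₀ ⊆ A₂) (he₀c : e₀.card = 2)
    {Pt : Finset (Finset ℕ)} (hsub : ∀ e ∈ Pt, e ⊆ A₂) (hpair : ∀ e ∈ Pt, e.card = 2)
    (hPd : (Pt : Set (Finset ℕ)).Pairwise Disjoint) (hU : Pt.biUnion id = A₂)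
    (hne : e₀ ∉ Pt) :
    ((A₁ ×ˢ Pt).filter fun yf => (insert x₀ e₀ ∩ insert yf.1 yf.2).card = 1).card
      = (Pt.card - 2) + 2 * (A₁.card - 1) := by
  have hc2 : ∀ f ∈ Pt, (e₀ ∩ f).card ≠ 2 := by
    intro f hf h
    have h1 : e₀ ∩ f = e₀ := Finset.eq_of_subset_of_card_le Finset.inter_subset_left
      (by rw [he₀c, h])
    have h2 : e₀ ⊆ f := h1 ▸ Finset.inter_subset_right
    have h3 : e₀ = f := Finset.eq_of_subset_of_card_le h2 (by rw [hpair f hf, he₀c])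
    exact hne (h3 ▸ hf)
  have hcle : ∀ f : Finset ℕ, (e₀ ∩ f).card ≤ 2 :=
    fun f => he₀c ▸ Finset.card_le_card Finset.inter_subset_left
  -- S₁ has card 2
  obtain ⟨p, q, hpq, he₀eq⟩ := Finset.card_eq_two.mp he₀c
  have hpA : p ∈ A₂ := he₀sub (by rw [he₀eq]; simp)
  have hqA : q ∈ A₂ := he₀sub (by rw [he₀eq]; simp)
  obtain ⟨fp, hfp, hpfp⟩ := Finset.mem_biUnion.mp (hU ▸ hpA)
  obtain ⟨fq, hfq, hqfq⟩ := Finset.mem_biUnion.mp (hU ▸ hqA)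
  simp only [id] at hpfp hqfq
  have hqfp : q ∉ fp := by
    intro hq
    have hsubf : e₀ ⊆ fp := by
      rw [he₀eq]; intro z hz
      simp only [Finset.mem_insert, Finset.mem_singleton] at hz
      rcases hz with rfl | rfl
      · exact hpfp
      · exact hq
    have : e₀ = fp := Finset.eq_of_subset_of_card_le hsubf (by rw [hpair fp hfp, he₀c])
    exact hne (this ▸ hfp)
  have hpfq : p ∉ fq := by
    intro hp
    have hsubf : e₀ ⊆ fq := by
      rw [he₀eq]; intro z hz
      simp only [Finset.mem_insert, Finset.mem_singleton] at hz
      rcases hz with rfl | rfl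
      · exact hp
      · exact hqfq
    have : e₀ = fq := Finset.eq_of_subset_of_card_le hsubf (by rw [hpair fq hfq, he₀c])
    exact hne (this ▸ hfq)
  have hfpfq : fp ≠ fq := fun h => hpfq (h ▸ hpfp)
  have hS₁ : Pt.filter (fun f => (e₀ ∩ f).card = 1) = {fp, fq} := by
    ext f
    simp only [Finset.mem_filter, Finset.mem_insert, Finset.mem_singleton]
    constructor
    · rintro ⟨hf, hc⟩
      obtain ⟨z, hz⟩ := Finset.card_eq_one.mp hc
      have hze : z ∈ e₀ ∩ f := hz ▸ Finset.mem_singleton_self z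
      have hzf : z ∈ f := (Finset.mem_inter.mp hze).2
      have hze₀ : z ∈ e₀ := (Finset.mem_inter.mp hze).1
      rw [he₀eq] at hze₀
      simp only [Finset.mem_insert, Finset.mem_singleton] at hze₀
      rcases hze₀ with rfl | rfl
      · left
        by_contra hne'
        exact Finset.disjoint_left.mp (hPd hf hfp hne') hzf hpfp
      · right
        by_contra hne'
        exact Finset.disjoint_left.mp (hPd hf hfq hne') hzf hqfq
    · rintro (rfl | rfl)
      · refine ⟨hfp, ?_⟩
        have : e₀ ∩ f = {p} := by
          ext z
          simp only [Finset.mem_inter, Finset.mem_singleton, he₀eq, Finset.mem_insert]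
          constructor
          · rintro ⟨rfl | rfl, hz2⟩
            · rfl
            · exact absurd hz2 hqfp
          · rintro rfl; exact ⟨Or.inl rfl, hpfp⟩
        rw [this, Finset.card_singleton]
      · refine ⟨hfq, ?_⟩
        have : e₀ ∩ f = {q} := by
          ext z
          simp only [Finset.mem_inter, Finset.mem_singleton, he₀eq, Finset.mem_insert]
          constructor
          · rintro ⟨rfl | rfl, hz2⟩
            · exact absurd hz2 hpfq
            · rfl
          · rintro rfl; exact ⟨Or.inr rfl, hqfq⟩
        rw [this, Finset.card_singleton]
  have hS₁card : (Pt.filter (fun f => (e₀ ∩ f).card = 1)).card = 2 := by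
    rw [hS₁]; exact Finset.card_pair hfpfq
  have hS₀card : (Pt.filter (fun f => (e₀ ∩ f).card = 0)).card = Pt.card - 2 := by
    have heq : Pt.filter (fun f => (e₀ ∩ f).card = 0)
        = Pt.filter (fun f => ¬ ((e₀ ∩ f).card = 1)) := by
      apply Finset.filter_congr
      intro f hf
      have := hc2 f hf
      have := hcle f
      constructor
      · intro h; omega
      · intro h; omega
    rw [heq, Finset.filter_not, Finset.card_sdiff_of_subset (Finset.filter_subset _ _), hS₁card]
  -- main
  have hcongr : (A₁ ×ˢ Pt).filter (fun yf => (insert x₀ e₀ ∩ insert yf.1 yf.2).card = 1)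
      = ((A₁ ×ˢ Pt).filter (fun yf => yf.1 = x₀ ∧ (e₀ ∩ yf.2).card = 0))
        ∪ ((A₁ ×ˢ Pt).filter (fun yf => yf.1 ≠ x₀ ∧ (e₀ ∩ yf.2).card = 1)) := by
    rw [← Finset.filter_or]
    apply Finset.filter_congr
    intro yf hyf
    simp only [Finset.mem_product] at hyf
    rw [inter_card_aux hdisj hx₀ hyf.1 he₀sub (hsub _ hyf.2)]
    by_cases hxy : yf.1 = x₀
    · rw [if_pos hxy.symm]
      simp only [hxy, ne_eq, not_true_eq_false, false_and, or_false, true_and]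
      omega
    · rw [if_neg (fun h => hxy h.symm)]
      simp only [hxy, ne_eq, not_false_eq_true, true_and, false_and, false_or]
      omega
  rw [hcongr, Finset.card_union_of_disjoint, Finset.filter_product (fun y => y = x₀) (fun f => (e₀ ∩ f).card = 0),
    Finset.filter_product (fun y => y ≠ x₀) (fun f => (e₀ ∩ f).card = 1), Finset.card_product, Finset.card_product,
    Finset.filter_eq', if_pos hx₀, Finset.filter_ne', Finset.card_singleton, one_mul,
    hS₀card, hS₁card, Finset.card_erase_of_mem hx₀]
  · ring
  · refine Finset.disjoint_left.mpr fun yf h1 h2 => ?_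
    simp only [Finset.mem_filter] at h1 h2
    exact h2.2.1 h1.2.1

lemma count_aux (n : ℕ) (A₁ A₂ : Finset ℕ) (hA₁ : A₁ ⊆ Finset.Icc 1 n)
    (hA₂ : A₂ ⊆ Finset.Icc 1 n) (hdisj : Disjoint A₁ A₂)
    (Pt : Finset (Finset ℕ)) (hsub : ∀ e ∈ Pt, e ⊆ A₂) (hpair : ∀ e ∈ Pt, e.card = 2)
    (Wtt : Finset (Vtx n))
    (hWtt : ∀ v : Vtx n, v ∈ Wtt ↔ ∃ x ∈ A₁, ∃ e ∈ Pt, v.1 = insert x e)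
    (p : Finset ℕ → Prop) [DecidablePred p] :
    (Wtt.filter fun v => p v.1).card
      = ((A₁ ×ˢ Pt).filter fun yf => p (insert yf.1 yf.2)).card := by
  refine (Finset.card_bij
    (i := fun (yf : ℕ × Finset ℕ) h =>
      (⟨insert yf.1 yf.2, by
        simp only [Finset.mem_filter, Finset.mem_product] at h
        exact vtx_prop hA₁ hA₂ hdisj h.1.1 (hsub _ h.1.2) (hpair _ h.1.2)⟩ : Vtx n))
    ?_ ?_ ?_).symm
  · intro yf h
    simp only [Finset.mem_filter, Finset.mem_product] at h ⊢
    exact ⟨(hWtt _).mpr ⟨yf.1, h.1.1, yf.2, h.1.2, rfl⟩, h.2⟩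
  · intro yf1 h1 yf2 h2 heq
    simp only [Finset.mem_filter, Finset.mem_product] at h1 h2
    have := Subtype.mk_eq_mk.mp heq
    obtain ⟨ha, hb⟩ := insert_inj_aux hdisj h1.1.1 h2.1.1 (hsub _ h1.1.2) (hsub _ h2.1.2) this
    exact Prod.ext ha hb
  · intro v hv
    simp only [Finset.mem_filter] at hv
    obtain ⟨x, hx, e, he, hve⟩ := (hWtt v).mp hv.1
    refine ⟨(x, e), ?_, ?_⟩
    · simp only [Finset.mem_filter, Finset.mem_product]
      exact ⟨⟨hx, he⟩, hve ▸ hv.2⟩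
    · exact Subtype.ext hve.symm

/-- Let `A₁, A₂ ⊆ {1, …, n}` be disjoint with `|A₂| = 2m`, `m ≥ 2`, `|A₁| = a ≥ 1`,
and let `P₁, …, P_k` (`k ≥ 1`) be pairwise disjoint partitions of `A₂` into pairs.
Let `W = ⋃_t W⁽ᵗ⁾` where `W⁽ᵗ⁾` consists of the vertices `{x} ∪ e`, `x ∈ A₁`,
`e ∈ P_t`. Then the subgraph induced on `W` is regular of degree
`(m−1) + (k−1)·((m−2) + 2(a−1))`, and `W` spans exactly
`(1/2)·k·a·m·((m−1) + (k−1)·((m−2) + 2(a−1)))` edges of `G(n,3,1)`. -/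
theorem stmt_11 (n m a k : ℕ) (hk : 1 ≤ k) (hm : 2 ≤ m) (ha : 1 ≤ a)
    (A₁ A₂ : Finset ℕ)
    (hA₁ : A₁ ⊆ Finset.Icc 1 n) (hA₂ : A₂ ⊆ Finset.Icc 1 n) (hdisj : Disjoint A₁ A₂)
    (hA₁card : A₁.card = a) (hA₂card : A₂.card = 2 * m)
    (P : Fin k → Finset (Finset ℕ))
    (hPpair : ∀ t, ∀ e ∈ P t, e.card = 2)
    (hPdisj : ∀ t, ((P t : Set (Finset ℕ))).Pairwise Disjoint)
    (hPunion : ∀ t, (P t).biUnion id = A₂)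
    (hPP : ∀ t t', t ≠ t' → Disjoint (P t) (P t'))
    (Wt : Fin k → Finset (Vtx n))
    (hWt : ∀ t, ∀ v : Vtx n, v ∈ Wt t ↔ ∃ x ∈ A₁, ∃ e ∈ P t, v.1 = insert x e)
    (W : Finset (Vtx n)) (hw : W = Finset.univ.biUnion Wt) :
    (∀ v : (W : Set (Vtx n)), ((G n).induce (W : Set (Vtx n))).degree v =
      (m - 1) + (k - 1) * ((m - 2) + 2 * (a - 1))) ∧
    edgesIn n W = k * a * m * ((m - 1) + (k - 1) * ((m - 2) + 2 * (a - 1))) / 2 := by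
  classical
  -- basic facts
  have hPsub : ∀ t, ∀ e ∈ P t, e ⊆ A₂ := by
    intro t e he z hz
    rw [← hPunion t]
    exact Finset.mem_biUnion.mpr ⟨e, he, hz⟩
  have hPcardm : ∀ t, (P t).card = m := by
    intro t
    have h1 : ((P t).biUnion id).card = ∑ e ∈ P t, (id e).card :=
      Finset.card_biUnion (fun x hx y hy hxy => hPdisj t hx hy hxy)
    rw [hPunion t, hA₂card] at h1
    have h2 : ∑ e ∈ P t, (id e).card = 2 * (P t).card := by
      calc ∑ e ∈ P t, (id e).card = ∑ _e ∈ P t, 2 :=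
            Finset.sum_congr rfl fun e he => hPpair t e he
        _ = 2 * (P t).card := by rw [Finset.sum_const, smul_eq_mul, mul_comm]
    omega
  have hWtdisj : ∀ t t', t ≠ t' → Disjoint (Wt t) (Wt t') := by
    intro t t' htt
    refine Finset.disjoint_left.mpr fun v hv hv' => ?_
    obtain ⟨x, hx, e, he, hve⟩ := (hWt t v).mp hv
    obtain ⟨y, hy, f, hf, hvf⟩ := (hWt t' v).mp hv'
    have hinj := insert_inj_aux hdisj hx hy (hPsub t e he) (hPsub t' f hf)
      (hve ▸ hvf)
    exact Finset.disjoint_left.mp (hPP t t' htt) he (hinj.2 ▸ hf)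
  -- degree formula
  have hreg : ∀ v : (W : Set (Vtx n)), ((G n).induce (W : Set (Vtx n))).degree v =
      (m - 1) + (k - 1) * ((m - 2) + 2 * (a - 1)) := by
    intro v
    have hdeg : ((G n).induce (W : Set (Vtx n))).degree v
        = (W.filter fun w => ((v : Vtx n).1 ∩ w.1).card = 1).card := by
      rw [← SimpleGraph.card_neighborFinset_eq_degree]
      refine Finset.card_bij (fun w _ => (w : Vtx n)) ?_ ?_ ?_
      · intro w hw'
        rw [SimpleGraph.mem_neighborFinset] at hw'
        simp only [Finset.mem_filter]
        exact ⟨Finset.mem_coe.mp w.2, hw'⟩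
      · intro w1 h1 w2 h2 heq
        exact Subtype.ext heq
      · intro w hw'
        simp only [Finset.mem_filter] at hw'
        refine ⟨⟨w, Finset.mem_coe.mpr hw'.1⟩, ?_, rfl⟩
        rw [SimpleGraph.mem_neighborFinset]
        exact hw'.2
    have hvW : (v : Vtx n) ∈ Finset.univ.biUnion Wt := by
      rw [← hw]; exact Finset.mem_coe.mp v.2
    obtain ⟨t₀, -, hvt₀⟩ := Finset.mem_biUnion.mp hvW
    obtain ⟨x₀, hx₀, e₀, he₀, hve⟩ := (hWt t₀ _).mp hvt₀
    have hsplit : (W.filter fun w => ((v : Vtx n).1 ∩ w.1).card = 1).card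
        = ∑ t : Fin k, ((Wt t).filter fun w => ((v : Vtx n).1 ∩ w.1).card = 1).card := by
      have hWF : (W.filter fun w => ((v : Vtx n).1 ∩ w.1).card = 1)
          = Finset.univ.biUnion
              (fun t => (Wt t).filter fun w => ((v : Vtx n).1 ∩ w.1).card = 1) := by
        rw [← Finset.filter_biUnion, ← hw]
      rw [hWF]
      exact Finset.card_biUnion (fun t _ t' _ htt =>
        Finset.disjoint_filter_filter (hWtdisj t t' htt))
    have hct : ∀ t : Fin k, ((Wt t).filter fun w => ((v : Vtx n).1 ∩ w.1).card = 1).card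
        = ((A₁ ×ˢ P t).filter fun yf =>
            ((v : Vtx n).1 ∩ insert yf.1 yf.2).card = 1).card := fun t =>
      count_aux n A₁ A₂ hA₁ hA₂ hdisj (P t) (hPsub t) (hPpair t) (Wt t) (hWt t)
        (fun s => ((v : Vtx n).1 ∩ s).card = 1)
    have hterm : ∀ t : Fin k, ((Wt t).filter fun w => ((v : Vtx n).1 ∩ w.1).card = 1).card
        = if t = t₀ then m - 1 else (m - 2) + 2 * (a - 1) := by
      intro t
      rw [hct t]
      by_cases htt : t = t₀
      · subst htt
        rw [if_pos rfl]
        have := same_count hdisj hx₀ (hPsub t) (hPpair t) (hPdisj t) he₀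
        rw [hve]
        rw [this, hPcardm t]
      · rw [if_neg htt]
        have hne0 : e₀ ∉ P t :=
          fun hmem => Finset.disjoint_left.mp (hPP t₀ t (Ne.symm htt)) he₀ hmem
        have := other_count hdisj hx₀ (hPsub t₀ e₀ he₀) (hPpair t₀ e₀ he₀)
          (hPsub t) (hPpair t) (hPdisj t) (hPunion t) hne0
        rw [hve, this, hPcardm t, hA₁card]
    rw [hdeg, hsplit, Finset.sum_congr rfl (fun t _ => hterm t),
      ← Finset.add_sum_erase _ _ (Finset.mem_univ t₀), if_pos rfl]
    congr 1
    rw [Finset.sum_congr rfl (fun t ht => if_neg (Finset.ne_of_mem_erase ht)),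
      Finset.sum_const, smul_eq_mul, Finset.card_erase_of_mem (Finset.mem_univ t₀),
      Finset.card_univ, Fintype.card_fin]
  refine ⟨hreg, ?_⟩
  -- cardinality of W
  have hWtcard : ∀ t, (Wt t).card = a * m := by
    intro t
    have h := count_aux n A₁ A₂ hA₁ hA₂ hdisj (P t) (hPsub t) (hPpair t) (Wt t) (hWt t)
      (fun _ => True)
    simp only [Finset.filter_true] at h
    rw [h, Finset.card_product, hA₁card, hPcardm t]
  have hWcard : W.card = k * (a * m) := by
    rw [hw, Finset.card_biUnion (fun t _ t' _ htt => hWtdisj t t' htt),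
      Finset.sum_congr rfl (fun t _ => hWtcard t), Finset.sum_const, smul_eq_mul,
      Finset.card_univ, Fintype.card_fin]
  -- handshake
  have h2E := SimpleGraph.sum_degrees_eq_twice_card_edges ((G n).induce (W : Set (Vtx n)))
  rw [Finset.sum_congr rfl (fun v _ => hreg v), Finset.sum_const, smul_eq_mul,
    Finset.card_univ, ← Set.toFinset_card, Finset.toFinset_coe, hWcard] at h2E
  have hE : edgesIn n W = ((G n).induce (W : Set (Vtx n))).edgeFinset.card := rfl
  rw [hE]
  have hmul : k * (a * m) * ((m - 1) + (k - 1) * ((m - 2) + 2 * (a - 1)))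
      = k * a * m * ((m - 1) + (k - 1) * ((m - 2) + 2 * (a - 1))) := by ring
  rw [hmul] at h2E
  omega
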